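/- If a finite simple graph G is the disjoint union of two graphs H_1 and H_2, then β(G) = β(H_1) · β(H_2). -/

import Mathlib

/-- One commutation move: swap two consecutive letters that are non-adjacent in `G`. -/
def CommStep {V : Type*} (G : SimpleGraph V) (w w' : List V) : Prop :=
  ∃ (a b : V) (u v : List V),
    ¬ G.Adj a b ∧ w = u ++ a :: b :: v ∧ w' = u ++ b :: a :: v

/-- Commutation equivalence of words: the equivalence relation generated by commutation moves. -/
def commSetoid {V : Type*} (G : SimpleGraph V) : Setoid (List V) :=
  ⟨Relation.EqvGen (CommStep G), Relation.EqvGen.is_equivalence _⟩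

/-- `bWords G k` = number of commutation classes of injective words of length `k` on `G`. -/
noncomputable def bWords {V : Type*} (G : SimpleGraph V) (k : ℕ) : ℕ :=
  Nat.card (Quotient (Setoid.comap
    (fun w : {w : List V // w.Nodup ∧ w.length = k} => w.1) (commSetoid G)))

/-- The boolean number `β(G) = (-1)^{|V|} ∑_{k=0}^{|V|} (-1)^k b_k(G)`. -/
noncomputable def booleanNumber {V : Type*} (G : SimpleGraph V) [Fintype V] : ℤ :=
  (-1) ^ (Fintype.card V) *
    ∑ k ∈ Finset.range (Fintype.card V + 1), (-1) ^ k * (bWords G k : ℤ)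

/-- The disjoint union of two simple graphs. -/
def disjUnionGraph {V₁ V₂ : Type*} (H₁ : SimpleGraph V₁) (H₂ : SimpleGraph V₂) :
    SimpleGraph (V₁ ⊕ V₂) where
  Adj a b :=
    match a, b with
    | Sum.inl x, Sum.inl y => H₁.Adj x y
    | Sum.inr x, Sum.inr y => H₂.Adj x y
    | _, _ => False
  symm := by
    constructor
    rintro (x | x) (y | y) h
    · exact H₁.adj_symm h
    · exact h
    · exact h
    · exact H₂.adj_symm h
  loopless := by
    constructor
    rintro (x | x) h
    · exact H₁.irrefl h
    · exact H₂.irrefl h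

namespace BNAux

open Relation List Sum

variable {V V₁ V₂ : Type*}

theorem eqvGen_map {α β : Type*} {r : α → α → Prop} {s : β → β → Prop} (f : α → β)
    (hf : ∀ a b, r a b → s (f a) (f b)) {a b : α} (h : EqvGen r a b) :
    EqvGen s (f a) (f b) := by
  induction h with
  | rel x y hxy => exact .rel _ _ (hf _ _ hxy)
  | refl x => exact .refl _
  | symm x y _ ih => exact .symm _ _ ih
  | trans x y z _ _ ih1 ih2 => exact .trans _ _ _ ih1 ih2

theorem commStep_cons {G : SimpleGraph V} (x : V) {w w' : List V} (h : CommStep G w w') :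
    CommStep G (x :: w) (x :: w') := by
  obtain ⟨a, b, u, v, hab, rfl, rfl⟩ := h
  exact ⟨a, b, x :: u, v, hab, rfl, rfl⟩

theorem commStep_append_left {G : SimpleGraph V} (t : List V) {w w' : List V}
    (h : CommStep G w w') : CommStep G (t ++ w) (t ++ w') := by
  obtain ⟨a, b, u, v, hab, rfl, rfl⟩ := h
  exact ⟨a, b, t ++ u, v, hab, by simp, by simp⟩

theorem commStep_append_right {G : SimpleGraph V} (t : List V) {w w' : List V}
    (h : CommStep G w w') : CommStep G (w ++ t) (w' ++ t) := by
  obtain ⟨a, b, u, v, hab, rfl, rfl⟩ := h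
  exact ⟨a, b, u, v ++ t, hab, by simp, by simp⟩

theorem commStep_length {G : SimpleGraph V} {w w' : List V} (h : CommStep G w w') :
    w.length = w'.length := by
  obtain ⟨a, b, u, v, hab, rfl, rfl⟩ := h
  simp

theorem eqvGen_length {G : SimpleGraph V} {w w' : List V}
    (h : EqvGen (CommStep G) w w') : w.length = w'.length := by
  induction h with
  | rel x y hxy => exact commStep_length hxy
  | refl x => rfl
  | symm x y _ ih => exact ih.symm
  | trans x y z _ _ ih1 ih2 => exact ih1.trans ih2

end BNAux

namespace BNAux2

open Relation List Sum BNAux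

variable {V₁ V₂ : Type*} {H₁ : SimpleGraph V₁} {H₂ : SimpleGraph V₂}

/-- Left projection. -/
def P1 (w : List (V₁ ⊕ V₂)) : List V₁ := w.filterMap Sum.getLeft?

/-- Right projection. -/
def P2 (w : List (V₁ ⊕ V₂)) : List V₂ := w.filterMap Sum.getRight?

@[simp] theorem P1_nil : P1 ([] : List (V₁ ⊕ V₂)) = [] := rfl
@[simp] theorem P2_nil : P2 ([] : List (V₁ ⊕ V₂)) = [] := rfl
@[simp] theorem P1_cons_inl (a : V₁) (w : List (V₁ ⊕ V₂)) :
    P1 (Sum.inl a :: w) = a :: P1 w := by simp [P1]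
@[simp] theorem P1_cons_inr (b : V₂) (w : List (V₁ ⊕ V₂)) :
    P1 (Sum.inr b :: w) = P1 w := rfl
@[simp] theorem P2_cons_inl (a : V₁) (w : List (V₁ ⊕ V₂)) :
    P2 (Sum.inl a :: w) = P2 w := rfl
@[simp] theorem P2_cons_inr (b : V₂) (w : List (V₁ ⊕ V₂)) :
    P2 (Sum.inr b :: w) = b :: P2 w := by simp [P2]
@[simp] theorem P1_append (u v : List (V₁ ⊕ V₂)) : P1 (u ++ v) = P1 u ++ P1 v := by
  simp [P1]
@[simp] theorem P2_append (u v : List (V₁ ⊕ V₂)) : P2 (u ++ v) = P2 u ++ P2 v := by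
  simp [P2]
@[simp] theorem P1_map_inl (l : List V₁) : P1 (l.map Sum.inl : List (V₁ ⊕ V₂)) = l := by
  induction l with
  | nil => rfl
  | cons a l ih => simp [ih]
@[simp] theorem P1_map_inr (l : List V₂) : P1 (l.map Sum.inr : List (V₁ ⊕ V₂)) = [] := by
  induction l with
  | nil => rfl
  | cons a l ih => simp [ih]
@[simp] theorem P2_map_inl (l : List V₁) : P2 (l.map Sum.inl : List (V₁ ⊕ V₂)) = [] := by
  induction l with
  | nil => rfl
  | cons a l ih => simp [ih]
@[simp] theorem P2_map_inr (l : List V₂) : P2 (l.map Sum.inr : List (V₁ ⊕ V₂)) = l := by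
  induction l with
  | nil => rfl
  | cons a l ih => simp [ih]

theorem P_length (w : List (V₁ ⊕ V₂)) : (P1 w).length + (P2 w).length = w.length := by
  induction w with
  | nil => rfl
  | cons x w ih => cases x <;> simp <;> omega

theorem P1_nodup {w : List (V₁ ⊕ V₂)} (h : w.Nodup) : (P1 w).Nodup := by
  refine h.filterMap ?_
  rintro (a | a) (b | b) c hc hc' <;> simp_all

theorem P2_nodup {w : List (V₁ ⊕ V₂)} (h : w.Nodup) : (P2 w).Nodup := by
  refine h.filterMap ?_
  rintro (a | a) (b | b) c hc hc' <;> simp_all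

theorem nodup_interleave {l : List V₁} {r : List V₂} (hl : l.Nodup) (hr : r.Nodup) :
    (l.map Sum.inl ++ r.map Sum.inr : List (V₁ ⊕ V₂)).Nodup := by
  refine List.Nodup.append (hl.map Sum.inl_injective) (hr.map Sum.inr_injective) ?_
  intro x hx hy
  simp only [List.mem_map] at hx hy
  obtain ⟨a, -, rfl⟩ := hx
  obtain ⟨b, -, h⟩ := hy
  simp at h

theorem not_adj_inr_inl (b : V₂) (a : V₁) : ¬ (disjUnionGraph H₁ H₂).Adj (Sum.inr b) (Sum.inl a) :=
  fun h => h

theorem adj_inl_iff {a b : V₁} :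
    (disjUnionGraph H₁ H₂).Adj (Sum.inl a) (Sum.inl b) ↔ H₁.Adj a b := Iff.rfl

theorem adj_inr_iff {a b : V₂} :
    (disjUnionGraph H₁ H₂).Adj (Sum.inr a) (Sum.inr b) ↔ H₂.Adj a b := Iff.rfl

/-- An `inr` letter moves past a block of `inl` letters. -/
theorem cross_move (b : V₂) (l : List V₁) (r : List (V₁ ⊕ V₂)) :
    EqvGen (CommStep (disjUnionGraph H₁ H₂))
      (Sum.inr b :: (l.map Sum.inl ++ r)) (l.map Sum.inl ++ Sum.inr b :: r) := by
  induction l generalizing r with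
  | nil => exact .refl _
  | cons a l ih =>
    refine .trans _ (Sum.inl a :: Sum.inr b :: (l.map Sum.inl ++ r)) _ (.rel _ _
      ⟨Sum.inr b, Sum.inl a, [], l.map Sum.inl ++ r, not_adj_inr_inl b a, by simp, by simp⟩) ?_
    have := eqvGen_map (fun t : List (V₁ ⊕ V₂) => Sum.inl a :: t)
      (fun _ _ h => commStep_cons (Sum.inl a) h) (ih r)
    simpa using this

/-- Every word is equivalent to its sorted form. -/
theorem sort_eqv (w : List (V₁ ⊕ V₂)) :
    EqvGen (CommStep (disjUnionGraph H₁ H₂))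
      w ((P1 w).map Sum.inl ++ (P2 w).map Sum.inr) := by
  induction w with
  | nil => exact .refl _
  | cons x w ih =>
    cases x with
    | inl a =>
      simpa using eqvGen_map _ (fun _ _ => commStep_cons (Sum.inl a)) ih
    | inr b =>
      refine .trans _ _ _ (eqvGen_map _ (fun _ _ => commStep_cons (Sum.inr b)) ih) ?_
      simpa using cross_move b (P1 w) ((P2 w).map Sum.inr)

/-- Projections of a commutation step are related. -/
theorem P1_commStep {w w' : List (V₁ ⊕ V₂)}
    (h : CommStep (disjUnionGraph H₁ H₂) w w') : EqvGen (CommStep H₁) (P1 w) (P1 w') := by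
  obtain ⟨a, b, u, v, hab, rfl, rfl⟩ := h
  cases a with
  | inl a' =>
    cases b with
    | inl b' =>
      refine .rel _ _ ⟨a', b', P1 u, P1 v, fun h => hab h, by simp, by simp⟩
    | inr b' => simp; exact .refl _
  | inr a' =>
    cases b with
    | inl b' => simp; exact .refl _
    | inr b' => simp; exact .refl _

theorem P2_commStep {w w' : List (V₁ ⊕ V₂)}
    (h : CommStep (disjUnionGraph H₁ H₂) w w') : EqvGen (CommStep H₂) (P2 w) (P2 w') := by
  obtain ⟨a, b, u, v, hab, rfl, rfl⟩ := h
  cases a with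
  | inl a' =>
    cases b with
    | inl b' => simp; exact .refl _
    | inr b' => simp; exact .refl _
  | inr a' =>
    cases b with
    | inl b' => simp; exact .refl _
    | inr b' =>
      refine .rel _ _ ⟨a', b', P2 u, P2 v, fun h => hab h, by simp, by simp⟩

theorem P1_eqvGen {w w' : List (V₁ ⊕ V₂)}
    (h : EqvGen (CommStep (disjUnionGraph H₁ H₂)) w w') :
    EqvGen (CommStep H₁) (P1 w) (P1 w') := by
  induction h with
  | rel x y hxy => exact P1_commStep hxy
  | refl x => exact .refl _
  | symm x y _ ih => exact .symm _ _ ih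
  | trans x y z _ _ ih1 ih2 => exact .trans _ _ _ ih1 ih2

theorem P2_eqvGen {w w' : List (V₁ ⊕ V₂)}
    (h : EqvGen (CommStep (disjUnionGraph H₁ H₂)) w w') :
    EqvGen (CommStep H₂) (P2 w) (P2 w') := by
  induction h with
  | rel x y hxy => exact P2_commStep hxy
  | refl x => exact .refl _
  | symm x y _ ih => exact .symm _ _ ih
  | trans x y z _ _ ih1 ih2 => exact .trans _ _ _ ih1 ih2

/-- Interleaving respects equivalence on the left factor. -/
theorem interleave_left {l l' : List V₁} (r : List V₂)
    (h : EqvGen (CommStep H₁) l l') :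
    EqvGen (CommStep (disjUnionGraph H₁ H₂))
      (l.map Sum.inl ++ r.map Sum.inr) (l'.map Sum.inl ++ r.map Sum.inr) := by
  refine eqvGen_map (fun t : List V₁ => t.map Sum.inl ++ r.map Sum.inr) ?_ h
  intro x y hxy
  refine commStep_append_right _ ?_
  obtain ⟨a, b, u, v, hab, rfl, rfl⟩ := hxy
  exact ⟨Sum.inl a, Sum.inl b, u.map Sum.inl, v.map Sum.inl, fun h => hab h, by simp, by simp⟩

theorem interleave_right (l : List V₁) {r r' : List V₂}
    (h : EqvGen (CommStep H₂) r r') :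
    EqvGen (CommStep (disjUnionGraph H₁ H₂))
      (l.map Sum.inl ++ r.map Sum.inr) (l.map Sum.inl ++ r'.map Sum.inr) := by
  refine eqvGen_map (fun t : List V₂ => l.map Sum.inl ++ t.map Sum.inr) ?_ h
  intro x y hxy
  refine commStep_append_left _ ?_
  obtain ⟨a, b, u, v, hab, rfl, rfl⟩ := hxy
  exact ⟨Sum.inr a, Sum.inr b, u.map Sum.inr, v.map Sum.inr, fun h => hab h, by simp, by simp⟩

end BNAux2

namespace BNAux3

open Relation List BNAux BNAux2

variable {V V₁ V₂ : Type*}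

/-- The subtype of injective words of length `k`. -/
abbrev SubW (G : SimpleGraph V) (k : ℕ) := {w : List V // w.Nodup ∧ w.length = k}

/-- The type of commutation classes of injective words of length `k`. -/
abbrev Cl (G : SimpleGraph V) (k : ℕ) :=
  Quotient (Setoid.comap (fun w : SubW G k => w.1) (commSetoid G))

theorem bWords_eq (G : SimpleGraph V) (k : ℕ) : bWords G k = Nat.card (Cl G k) := rfl

instance finite_subW (G : SimpleGraph V) [Fintype V] (k : ℕ) : Finite (SubW G k) := by
  haveI : Finite {l : List V | l.length = k} := (List.finite_length_eq V k)
  refine Finite.of_injective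
    (fun w => (⟨w.1, w.2.2⟩ : {l : List V | l.length = k})) ?_
  intro w w' h
  have h' : w.1 = w'.1 := congrArg (fun v : {l : List V | l.length = k} => v.1) h
  exact Subtype.ext h'

theorem bWords_eq_zero (G : SimpleGraph V) [Fintype V] {k : ℕ} (hk : Fintype.card V < k) :
    bWords G k = 0 := by
  haveI : IsEmpty (SubW G k) :=
    ⟨fun w => absurd w.2.1.length_le_card (by rw [w.2.2]; omega)⟩
  rw [bWords_eq]
  exact Nat.card_of_isEmpty

variable {H₁ : SimpleGraph V₁} {H₂ : SimpleGraph V₂} {k : ℕ}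

/-- Target of the decomposition. -/
abbrev Tgt (H₁ : SimpleGraph V₁) (H₂ : SimpleGraph V₂) (k : ℕ) :=
  Σ i : Fin (k + 1), Cl H₁ i × Cl H₂ (k - i)

theorem tgt_eq {i i' : ℕ} (hik : i < k + 1) (hik' : i' < k + 1)
    (x : SubW H₁ i) (y : SubW H₂ (k - i)) (x' : SubW H₁ i') (y' : SubW H₂ (k - i'))
    (hi : i = i')
    (hx : EqvGen (CommStep H₁) x.1 x'.1) (hy : EqvGen (CommStep H₂) y.1 y'.1) :
    (⟨⟨i, hik⟩, Quotient.mk _ x, Quotient.mk _ y⟩ : Tgt H₁ H₂ k)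
      = ⟨⟨i', hik'⟩, Quotient.mk _ x', Quotient.mk _ y'⟩ := by
  subst hi
  exact congrArg (fun p : Cl H₁ i × Cl H₂ (k - i) => (⟨⟨i, hik⟩, p⟩ : Tgt H₁ H₂ k))
    (Prod.ext (Quotient.sound hx) (Quotient.sound hy))

/-- Forward map on representatives. -/
noncomputable def fwdAux (w : SubW (disjUnionGraph H₁ H₂) k) : Tgt H₁ H₂ k :=
  ⟨⟨(P1 w.1).length, by have := P_length w.1; rw [w.2.2] at this; omega⟩,
    Quotient.mk _ ⟨P1 w.1, P1_nodup w.2.1, rfl⟩,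
    Quotient.mk _ ⟨P2 w.1, P2_nodup w.2.1,
      show (P2 w.1).length = k - (P1 w.1).length by
        have := P_length w.1; rw [w.2.2] at this; omega⟩⟩

noncomputable def fwd : Cl (disjUnionGraph H₁ H₂) k → Tgt H₁ H₂ k :=
  Quotient.lift fwdAux (by
    intro w w' (h : EqvGen (CommStep (disjUnionGraph H₁ H₂)) w.1 w'.1)
    exact tgt_eq _ _ _ _ _ _ (eqvGen_length (P1_eqvGen h)) (P1_eqvGen h) (P2_eqvGen h))

/-- Backward map on representatives. -/
noncomputable def bwdAux (i : Fin (k + 1)) (x : SubW H₁ i) (y : SubW H₂ (k - i)) :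
    Cl (disjUnionGraph H₁ H₂) k :=
  Quotient.mk _ ⟨x.1.map Sum.inl ++ y.1.map Sum.inr,
    nodup_interleave x.2.1 y.2.1,
    by have hik : (i : ℕ) ≤ k := Nat.lt_succ_iff.mp i.isLt
       simp [x.2.2, y.2.2]; omega⟩

noncomputable def bwd : Tgt H₁ H₂ k → Cl (disjUnionGraph H₁ H₂) k :=
  fun p => Quotient.lift₂ (bwdAux p.1) (by
    intro x y x' y' (hx : EqvGen (CommStep H₁) x.1 x'.1) (hy : EqvGen (CommStep H₂) y.1 y'.1)
    refine Quotient.sound (?_ : EqvGen (CommStep (disjUnionGraph H₁ H₂)) _ _)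
    exact .trans _ _ _ (interleave_left y.1 hx) (interleave_right x'.1 hy)) p.2.1 p.2.2

theorem bwd_fwd (c : Cl (disjUnionGraph H₁ H₂) k) : bwd (fwd c) = c := by
  induction c using Quotient.ind with
  | _ w =>
    refine Quotient.sound (?_ : EqvGen (CommStep (disjUnionGraph H₁ H₂)) _ _)
    exact .symm _ _ (sort_eqv w.1)

theorem fwd_bwd (p : Tgt H₁ H₂ k) : fwd (bwd p) = p := by
  obtain ⟨⟨i, hi⟩, c₁, c₂⟩ := p
  induction c₁ using Quotient.ind with
  | _ x =>
    induction c₂ using Quotient.ind with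
    | _ y =>
      show fwdAux _ = _
      refine tgt_eq _ _ _ _ _ _ ?_ ?_ ?_
      · show (P1 (x.1.map Sum.inl ++ y.1.map Sum.inr)).length = i
        rw [P1_append, P1_map_inl, P1_map_inr]
        simpa using x.2.2
      · show EqvGen (CommStep H₁) (P1 (x.1.map Sum.inl ++ y.1.map Sum.inr)) x.1
        rw [P1_append, P1_map_inl, P1_map_inr, List.append_nil]
        exact .refl _
      · show EqvGen (CommStep H₂) (P2 (x.1.map Sum.inl ++ y.1.map Sum.inr)) y.1
        rw [P2_append, P2_map_inl, P2_map_inr, List.nil_append]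
        exact .refl _

noncomputable def clEquiv : Cl (disjUnionGraph H₁ H₂) k ≃ Tgt H₁ H₂ k :=
  ⟨fwd, bwd, bwd_fwd, fwd_bwd⟩



theorem bWords_disjUnion (H₁ : SimpleGraph V₁) (H₂ : SimpleGraph V₂)
    [Fintype V₁] [Fintype V₂] (k : ℕ) :
    bWords (disjUnionGraph H₁ H₂) k
      = ∑ i ∈ Finset.range (k + 1), bWords H₁ i * bWords H₂ (k - i) := by
  classical
  letI F1 : ∀ i : ℕ, Fintype (Cl H₁ i) := fun i => Fintype.ofFinite _
  letI F2 : ∀ i : ℕ, Fintype (Cl H₂ i) := fun i => Fintype.ofFinite _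
  calc bWords (disjUnionGraph H₁ H₂) k = Nat.card (Tgt H₁ H₂ k) := by
        rw [bWords_eq]; exact Nat.card_congr clEquiv
    _ = ∑ i : Fin (k + 1), Nat.card (Cl H₁ i × Cl H₂ (k - i)) := by
        rw [Nat.card_eq_fintype_card, Fintype.card_sigma]
        exact Finset.sum_congr rfl fun i _ => (Nat.card_eq_fintype_card).symm
    _ = ∑ i ∈ Finset.range (k + 1), Nat.card (Cl H₁ i × Cl H₂ (k - i)) :=
        Fin.sum_univ_eq_sum_range (fun i => Nat.card (Cl H₁ i × Cl H₂ (k - i))) (k + 1)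
    _ = ∑ i ∈ Finset.range (k + 1), bWords H₁ i * bWords H₂ (k - i) :=
        Finset.sum_congr rfl fun i _ => by rw [Nat.card_prod, bWords_eq, bWords_eq]

theorem booleanNumber_disjUnion' {V₁ V₂ : Type*} [Fintype V₁] [Fintype V₂]
    (H₁ : SimpleGraph V₁) (H₂ : SimpleGraph V₂) :
    booleanNumber (disjUnionGraph H₁ H₂) = booleanNumber H₁ * booleanNumber H₂ := by
  classical
  unfold booleanNumber
  rw [Fintype.card_sum]
  set n₁ := Fintype.card V₁ with hn₁
  set n₂ := Fintype.card V₂ with hn₂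
  have hA : ∀ m, n₁ < m → ((-1 : ℤ) ^ m * (bWords H₁ m : ℤ)) = 0 := fun m hm => by
    rw [bWords_eq_zero H₁ hm]; simp
  have hB : ∀ m, n₂ < m → ((-1 : ℤ) ^ m * (bWords H₂ m : ℤ)) = 0 := fun m hm => by
    rw [bWords_eq_zero H₂ hm]; simp
  have key : ∑ k ∈ Finset.range (n₁ + n₂ + 1),
        (-1 : ℤ) ^ k * (bWords (disjUnionGraph H₁ H₂) k : ℤ)
      = (∑ i ∈ Finset.range (n₁ + 1), (-1 : ℤ) ^ i * (bWords H₁ i : ℤ))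
        * (∑ j ∈ Finset.range (n₂ + 1), (-1 : ℤ) ^ j * (bWords H₂ j : ℤ)) := by
    have step1 : ∀ k ∈ Finset.range (n₁ + n₂ + 1),
        (-1 : ℤ) ^ k * (bWords (disjUnionGraph H₁ H₂) k : ℤ)
        = ∑ i ∈ Finset.range (k + 1),
            ((-1 : ℤ) ^ i * (bWords H₁ i : ℤ))
              * ((-1 : ℤ) ^ (k - i) * (bWords H₂ (k - i) : ℤ)) := by
      intro k _
      rw [bWords_disjUnion H₁ H₂ k]
      push_cast
      rw [Finset.mul_sum]
      refine Finset.sum_congr rfl fun i hi => ?_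
      have hik : i ≤ k := Nat.lt_succ_iff.mp (Finset.mem_range.mp hi)
      have hpow : (-1 : ℤ) ^ k = (-1) ^ i * (-1) ^ (k - i) := by
        rw [← pow_add, Nat.add_sub_cancel' hik]
      rw [hpow]; ring
    rw [Finset.sum_congr rfl step1]
    rw [Finset.sum_range_diag_flip (n₁ + n₂ + 1)
      (fun a b => ((-1 : ℤ) ^ a * (bWords H₁ a : ℤ)) * ((-1 : ℤ) ^ b * (bWords H₂ b : ℤ)))]
    calc ∑ m ∈ Finset.range (n₁ + n₂ + 1), ∑ j ∈ Finset.range (n₁ + n₂ + 1 - m),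
            ((-1 : ℤ) ^ m * (bWords H₁ m : ℤ)) * ((-1 : ℤ) ^ j * (bWords H₂ j : ℤ))
        = ∑ m ∈ Finset.range (n₁ + n₂ + 1), ((-1 : ℤ) ^ m * (bWords H₁ m : ℤ))
            * ∑ j ∈ Finset.range (n₁ + n₂ + 1 - m), ((-1 : ℤ) ^ j * (bWords H₂ j : ℤ)) := by
          simp [Finset.mul_sum]
      _ = ∑ m ∈ Finset.range (n₁ + 1), ((-1 : ℤ) ^ m * (bWords H₁ m : ℤ))
            * ∑ j ∈ Finset.range (n₁ + n₂ + 1 - m), ((-1 : ℤ) ^ j * (bWords H₂ j : ℤ)) := by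
          refine (Finset.sum_subset (Finset.range_subset_range.mpr (by omega)) ?_).symm
          intro m _ hm
          have hm' : n₁ < m := by
            simp only [Finset.mem_range] at hm; omega
          rw [hA m hm', zero_mul]
      _ = ∑ m ∈ Finset.range (n₁ + 1), ((-1 : ℤ) ^ m * (bWords H₁ m : ℤ))
            * ∑ j ∈ Finset.range (n₂ + 1), ((-1 : ℤ) ^ j * (bWords H₂ j : ℤ)) := by
          refine Finset.sum_congr rfl fun m hm => ?_
          have hm' : m ≤ n₁ := Nat.lt_succ_iff.mp (Finset.mem_range.mp hm)
          congr 1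
          refine (Finset.sum_subset (Finset.range_subset_range.mpr (by omega)) ?_).symm
          intro j _ hj
          have hj' : n₂ < j := by
            simp only [Finset.mem_range] at hj; omega
          exact hB j hj'
      _ = (∑ m ∈ Finset.range (n₁ + 1), (-1 : ℤ) ^ m * (bWords H₁ m : ℤ))
            * (∑ j ∈ Finset.range (n₂ + 1), (-1 : ℤ) ^ j * (bWords H₂ j : ℤ)) := by
          rw [Finset.sum_mul]
  rw [key, pow_add]
  ring

end BNAux3

/-- **The boolean number is multiplicative over disjoint unions:**
if `G = H₁ ⊔ H₂` then `β(G) = β(H₁) · β(H₂)`. -/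
theorem booleanNumber_disjUnion {V₁ V₂ : Type*} [Fintype V₁] [Fintype V₂]
    (H₁ : SimpleGraph V₁) (H₂ : SimpleGraph V₂) :
    booleanNumber (disjUnionGraph H₁ H₂) = booleanNumber H₁ * booleanNumber H₂ := by
  exact BNAux3.booleanNumber_disjUnion' H₁ H₂
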